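/- For α, β, γ ∈ ℝ, the function (x, y) ↦ exp(−(1/2) e^{−2x} (α + γ + α e^{4x}(y² + 1) + 2β e^{2x} y)) is Lebesgue integrable on ℝ² if and only if α > 0 and α(α + γ) − β² > 0. Hence the Souriau space Ω of admissible generalized temperatures for the Poincaré plane is exactly the open cone in sl(2,ℝ) cut out by these two inequalities. -/

import Mathlib

open MeasureTheory Real Set

private lemma aux_not_integrable {h : ℝ → ℝ} {s : Set ℝ} (hs : MeasurableSet s)
    (hvol : volume s = ⊤) {C : ℝ} (hC : 0 < C) (hb : ∀ y ∈ s, C ≤ h y) :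
    ¬ Integrable h := by
  intro hint
  have h1 : IntegrableOn (fun _ : ℝ => C) s := by
    refine Integrable.mono hint.integrableOn aestronglyMeasurable_const ?_
    refine (ae_restrict_iff' hs).2 (Filter.Eventually.of_forall fun y hy => ?_)
    have hCy := hb y hy
    rw [Real.norm_of_nonneg hC.le, Real.norm_of_nonneg (hC.le.trans hCy)]
    exact hCy
  rw [integrableOn_const_iff] at h1
  rcases h1 with h | h
  · exact hC.ne' (enorm_eq_zero.1 h)
  · rw [hvol] at h; exact lt_irrefl _ h

private lemma gauss_integrable {b : ℝ} (hb : 0 < b) (m : ℝ) :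
    Integrable (fun y : ℝ => Real.exp (-b * (y + m) ^ 2)) :=
  (integrable_exp_neg_mul_sq hb).comp_add_right m

private lemma gauss_value {b : ℝ} (_hb : 0 < b) (m : ℝ) :
    ∫ y : ℝ, Real.exp (-b * (y + m) ^ 2) = Real.sqrt (Real.pi / b) := by
  rw [integral_add_right_eq_self (fun y => Real.exp (-b * y ^ 2)) m]
  exact integral_gaussian b

private lemma exp_quad_integrable {d : ℝ} (hd : 0 < d) (e : ℝ) :
    Integrable (fun x : ℝ => Real.exp (-d * x ^ 2 + e * x)) := by
  have h : ∀ x : ℝ, Real.exp (-d * x ^ 2 + e * x)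
      = Real.exp (e ^ 2 / (4 * d)) * Real.exp (-d * (x + -(e / (2 * d))) ^ 2) := by
    intro x
    rw [← Real.exp_add]
    congr 1
    field_simp
    ring
  rw [funext h]
  exact (gauss_integrable hd _).const_mul _

private lemma sq_quarter_le_exp {t : ℝ} (ht : 0 ≤ t) : t ^ 2 / 4 ≤ Real.exp t := by
  have h1 : t / 2 + 1 ≤ Real.exp (t / 2) := Real.add_one_le_exp _
  have h2 : Real.exp (t / 2) * Real.exp (t / 2) = Real.exp t := by
    rw [← Real.exp_add]; ring_nf
  nlinarith [Real.exp_pos (t / 2)]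

private lemma key_id {α : ℝ} (hα : α ≠ 0) (β γ x y : ℝ) :
    -(1/2) * Real.exp (-2*x) * (α + γ + α * Real.exp (4*x) * (y^2 + 1) + 2*β*Real.exp (2*x)*y)
      = -(1/2) * ((α + γ - β^2/α) * Real.exp (-2*x) + α * Real.exp (2*x))
        + -(α * Real.exp (2*x)/2) * (y + (β/α) * Real.exp (-2*x))^2 := by
  have h4 : Real.exp (4*x) = Real.exp (2*x) ^ 2 := by rw [sq, ← Real.exp_add]; ring_nf
  have hm : Real.exp (-2*x) = (Real.exp (2*x))⁻¹ := by rw [← Real.exp_neg]; ring_nf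
  have hu : Real.exp (2*x) ≠ 0 := (Real.exp_pos _).ne'
  rw [h4, hm]
  field_simp
  ring

private lemma exp_split {α : ℝ} (hα : α ≠ 0) (β γ x y : ℝ) :
    Real.exp (-(1/2) * Real.exp (-2*x) *
        (α + γ + α * Real.exp (4*x) * (y^2 + 1) + 2*β*Real.exp (2*x)*y))
      = Real.exp (-(1/2) * ((α + γ - β^2/α) * Real.exp (-2*x) + α * Real.exp (2*x)))
        * Real.exp (-(α * Real.exp (2*x)/2) * (y + (β/α) * Real.exp (-2*x))^2) := by
  rw [← Real.exp_add, key_id hα β γ x y]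

private lemma Fval {α : ℝ} (hα : 0 < α) (β γ x : ℝ) :
    (∫ y : ℝ, Real.exp (-(1/2) * Real.exp (-2*x) *
        (α + γ + α * Real.exp (4*x) * (y^2 + 1) + 2*β*Real.exp (2*x)*y)))
      = Real.sqrt (2*Real.pi/α) * Real.exp (-x)
        * Real.exp (-(1/2) * ((α + γ - β^2/α) * Real.exp (-2*x) + α * Real.exp (2*x))) := by
  have hb : 0 < α * Real.exp (2*x) / 2 := by positivity
  simp only [exp_split hα.ne' β γ x]
  rw [integral_const_mul, gauss_value hb]
  have h1 : Real.exp (-x) ^ 2 * Real.exp (2*x) = 1 := by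
    rw [sq, ← Real.exp_add, ← Real.exp_add, show -x + -x + 2*x = 0 by ring, Real.exp_zero]
  have hs : Real.sqrt (Real.pi / (α * Real.exp (2*x) / 2))
      = Real.sqrt (2*Real.pi/α) * Real.exp (-x) := by
    rw [show Real.pi / (α * Real.exp (2*x) / 2) = (2*Real.pi/α) * Real.exp (-x) ^ 2 by
      field_simp
      linear_combination (-1) * h1]
    rw [Real.sqrt_mul (by positivity), Real.sqrt_sq (Real.exp_pos _).le]
  rw [hs]; ring

/-- Characterization of the Souriau space `Ω` of admissible generalized temperatures for the
Poincaré plane: the Gibbs integrand is Lebesgue integrable on `ℝ²` if and only if `α > 0` and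
`α(α+γ) − β² > 0`, i.e. `Ω` is exactly the open cone in `sl(2,ℝ)` cut out by these
inequalities. -/
theorem stmt_8 (α β γ : ℝ) :
    Integrable (fun p : ℝ × ℝ => Real.exp (-(1/2) * Real.exp (-2*p.1) *
        (α + γ + α * Real.exp (4*p.1) * (p.2^2 + 1) + 2*β*Real.exp (2*p.1)*p.2))) volume
      ↔ (0 < α ∧ 0 < α * (α + γ) - β^2) := by
  rw [Measure.volume_eq_prod]
  rw [integrable_prod_iff (Continuous.aestronglyMeasurable (by fun_prop))]
  simp only [Real.norm_eq_abs, Real.abs_exp]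
  constructor
  · rintro ⟨hae, hint⟩
    have hα : 0 < α := by
      by_contra hα0
      push_neg at hα0
      obtain ⟨x, hx⟩ := hae.exists
      have he1 : Real.exp (-2*x) * Real.exp (4*x) = Real.exp (2*x) := by
        rw [← Real.exp_add]; ring_nf
      have he2 : Real.exp (-2*x) * Real.exp (2*x) = 1 := by
        rw [← Real.exp_add]; norm_num
      have hbound : ∀ y : ℝ, β * y ≤ 0 →
          Real.exp (-(1/2) * Real.exp (-2*x) * (α + γ))
            ≤ Real.exp (-(1/2) * Real.exp (-2*x) *
                (α + γ + α * Real.exp (4*x) * (y^2 + 1) + 2*β*Real.exp (2*x)*y)) := by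
        intro y hy
        apply Real.exp_le_exp.2
        have key : -(1/2) * Real.exp (-2*x) *
            (α + γ + α * Real.exp (4*x) * (y^2 + 1) + 2*β*Real.exp (2*x)*y)
            = -(1/2) * Real.exp (-2*x) * (α + γ)
              + (-(1/2)) * (α * Real.exp (2*x) * (y^2+1)) - β * y := by
          linear_combination (-(1/2) * (α * (y^2+1))) * he1 - (β * y) * he2
        rw [key]
        have t1 : α * Real.exp (2*x) * (y^2+1) ≤ 0 :=
          mul_nonpos_of_nonpos_of_nonneg
            (mul_nonpos_of_nonpos_of_nonneg hα0 (Real.exp_pos _).le) (by positivity)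
        linarith
      rcases le_total β 0 with hβ | hβ
      · exact aux_not_integrable measurableSet_Ici Real.volume_Ici
          (Real.exp_pos (-(1/2) * Real.exp (-2*x) * (α + γ)))
          (fun y hy => hbound y (mul_nonpos_of_nonpos_of_nonneg hβ hy)) hx
      · exact aux_not_integrable measurableSet_Iic Real.volume_Iic
          (Real.exp_pos (-(1/2) * Real.exp (-2*x) * (α + γ)))
          (fun y hy => hbound y (mul_nonpos_of_nonneg_of_nonpos hβ hy)) hx
    refine ⟨hα, ?_⟩
    by_contra hc
    push_neg at hc
    have hc' : α + γ - β^2/α ≤ 0 := by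
      have e : α + γ - β^2/α = (α*(α+γ) - β^2)/α := by field_simp
      rw [e]
      exact div_nonpos_of_nonpos_of_nonneg hc hα.le
    simp only [Fval hα β γ] at hint
    refine aux_not_integrable (s := Set.Iic 0) measurableSet_Iic Real.volume_Iic
      (C := Real.sqrt (2*Real.pi/α) * Real.exp (-(1/2)*α))
      (by positivity) (fun x hx => ?_) hint
    have e1 : Real.exp (-(1/2)*α)
        ≤ Real.exp (-(1/2) * ((α + γ - β^2/α) * Real.exp (-2*x) + α * Real.exp (2*x))) := by
      apply Real.exp_le_exp.2
      have h1 : (α + γ - β^2/α) * Real.exp (-2*x) ≤ 0 :=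
        mul_nonpos_of_nonpos_of_nonneg hc' (Real.exp_pos _).le
      have h2 : Real.exp (2*x) ≤ 1 := Real.exp_le_one_iff.2 (by simp at hx; linarith)
      nlinarith [hα]
    have e2 : (1:ℝ) ≤ Real.exp (-x) := Real.one_le_exp (by simp at hx; linarith)
    have hs0 : 0 < Real.sqrt (2*Real.pi/α) := Real.sqrt_pos.2 (by positivity)
    nlinarith [mul_le_mul e2 e1 (Real.exp_pos _).le (by positivity), hs0]
  · rintro ⟨hα, hd⟩
    have hc : 0 < α + γ - β^2/α := by
      have e : α + γ - β^2/α = (α*(α+γ) - β^2)/α := by field_simp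
      rw [e]
      exact div_pos hd hα
    constructor
    · refine Filter.Eventually.of_forall fun x => ?_
      have hb : 0 < α * Real.exp (2*x) / 2 := by positivity
      simp only [exp_split hα.ne' β γ x]
      exact (gauss_integrable hb _).const_mul _
    · simp only [Fval hα β γ]
      have hm : 0 < min (α + γ - β^2/α) α / 2 := by positivity
      refine Integrable.mono
        ((exp_quad_integrable hm (-1)).const_mul (Real.sqrt (2*Real.pi/α)))
        (Continuous.aestronglyMeasurable (by fun_prop))
        (Filter.Eventually.of_forall fun x => ?_)
      rw [Real.norm_of_nonneg (by positivity), Real.norm_of_nonneg (by positivity)]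
      have key : Real.exp (-x)
          * Real.exp (-(1/2) * ((α + γ - β^2/α) * Real.exp (-2*x) + α * Real.exp (2*x)))
          ≤ Real.exp (-(min (α + γ - β^2/α) α / 2) * x^2 + (-1) * x) := by
        rw [← Real.exp_add]
        apply Real.exp_le_exp.2
        rcases le_total x 0 with hx | hx
        · have h1 := sq_quarter_le_exp (t := -2*x) (by linarith)
          nlinarith [Real.exp_pos (2*x), hc, hα, min_le_left (α + γ - β^2/α) α,
            lt_min hc hα, sq_nonneg x]
        · have h1 := sq_quarter_le_exp (t := 2*x) (by linarith)
          nlinarith [Real.exp_pos (-2*x), hc, hα, min_le_right (α + γ - β^2/α) α,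
            lt_min hc hα, sq_nonneg x]
      nlinarith [mul_le_mul_of_nonneg_left key (Real.sqrt_nonneg (2*Real.pi/α))]
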